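/- Let H be a complex Hilbert space, h ∈ H, and L a nonempty set of closed (linear) subspaces of H. For A ⊆ L, with A* the intersection of all members of A and A*_p the orthogonal projection onto A*, define C(A) = {b ∈ L | A*_p(h) ∈ b}. If B ⊆ C(A), then A*_p(h) = (A* ∩ B*)_p(h) and dist(h, A*) ≥ dist(h, B*). -/

import Mathlib

/-- The orthogonal projection onto a closed subspace `K` of a complex Hilbert space,
as a map `H → H`: `projPt K hK x` is the point of `K` closest to `x`. -/
noncomputable def projPt {H : Type*} [NormedAddCommGroup H] [InnerProductSpace ℂ H]
    [CompleteSpace H] (K : Submodule ℂ H) (hK : IsClosed (K : Set H)) (x : H) : H :=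
  haveI : CompleteSpace K := hK.completeSpace_coe
  (K.orthogonalProjectionOnto x : H)

/-- `Astar Lset A` is `A*`: the intersection of all the subspaces belonging to
`A ⊆ Lset` (equal to `H` when `A = ∅`). -/
noncomputable def Astar {H : Type*} [NormedAddCommGroup H] [InnerProductSpace ℂ H]
    [CompleteSpace H] (Lset : Set (Submodule ℂ H)) (A : Set ↥Lset) : Submodule ℂ H :=
  sInf ((fun k : ↥Lset => (k : Submodule ℂ H)) '' A)

/-- `A*` is a closed subspace. -/
lemma isClosed_Astar {H : Type*} [NormedAddCommGroup H] [InnerProductSpace ℂ H]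
    [CompleteSpace H] {Lset : Set (Submodule ℂ H)}
    (hL : ∀ K ∈ Lset, IsClosed (K : Set H)) (A : Set ↥Lset) :
    IsClosed ((Astar Lset A : Submodule ℂ H) : Set H) := by
  rw [Astar, Submodule.coe_sInf]
  refine isClosed_biInter ?_
  rintro K ⟨k, hk, rfl⟩
  exact hL k k.2

/-- The intersection of two closed subspaces is closed. -/
lemma isClosed_inf {H : Type*} [NormedAddCommGroup H] [InnerProductSpace ℂ H]
    [CompleteSpace H] {K K' : Submodule ℂ H}
    (h : IsClosed (K : Set H)) (h' : IsClosed (K' : Set H)) :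
    IsClosed ((K ⊓ K' : Submodule ℂ H) : Set H) := by
  rw [Submodule.coe_inf]
  exact h.inter h'

/-- The quantum consequence operation of Engesser and Gabbay determined by the state
`h`: `b ∈ C(A)` iff the projection of `h` on `A*` belongs to `b`. -/
noncomputable def qC {H : Type*} [NormedAddCommGroup H] [InnerProductSpace ℂ H]
    [CompleteSpace H] (Lset : Set (Submodule ℂ H))
    (hL : ∀ K ∈ Lset, IsClosed (K : Set H)) (h : H) (A : Set ↥Lset) : Set ↥Lset :=
  {b | projPt (Astar Lset A) (isClosed_Astar hL A) h ∈ (b : Submodule ℂ H)}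

/-- If `B ⊆ C(A)`, then `A*_p(h) = (A* ∩ B*)_p(h)` and `dist(h, A*) ≥ dist(h, B*)`. -/
theorem stmt_18 {H : Type*} [NormedAddCommGroup H] [InnerProductSpace ℂ H]
    [CompleteSpace H] (h : H) (Lset : Set (Submodule ℂ H)) (hLne : Lset.Nonempty)
    (hL : ∀ K ∈ Lset, IsClosed (K : Set H))
    (A B : Set ↥Lset) (hB : B ⊆ qC Lset hL h A) :
    projPt (Astar Lset A) (isClosed_Astar hL A) h =
      projPt (Astar Lset A ⊓ Astar Lset B)
        (isClosed_inf (isClosed_Astar hL A) (isClosed_Astar hL B)) h ∧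
    Metric.infDist h ((Astar Lset A : Submodule ℂ H) : Set H) ≥
      Metric.infDist h ((Astar Lset B : Submodule ℂ H) : Set H) := by
  haveI : CompleteSpace (Astar Lset A) := (isClosed_Astar hL A).completeSpace_coe
  haveI : CompleteSpace (Astar Lset B) := (isClosed_Astar hL B).completeSpace_coe
  haveI : CompleteSpace (Astar Lset A ⊓ Astar Lset B : Submodule ℂ H) :=
    (isClosed_inf (isClosed_Astar hL A) (isClosed_Astar hL B)).completeSpace_coe
  set P : H := projPt (Astar Lset A) (isClosed_Astar hL A) h with hP
  have hPA : P ∈ Astar Lset A := ((Astar Lset A).orthogonalProjectionOnto h).2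
  have hPB : P ∈ Astar Lset B := by
    rw [Astar, Submodule.mem_sInf]
    rintro K ⟨b, hb, rfl⟩
    exact hB hb
  have hPint : P ∈ Astar Lset A ⊓ Astar Lset B := ⟨hPA, hPB⟩
  have horth : h - P ∈ (Astar Lset A ⊓ Astar Lset B)ᗮ := by
    apply Submodule.orthogonal_le inf_le_left
    exact Submodule.sub_starProjection_mem_orthogonal (K := Astar Lset A) h
  constructor
  · exact (Submodule.eq_starProjection_of_mem_orthogonal hPint horth).symm
  · have h1 : Metric.infDist h ((Astar Lset A : Submodule ℂ H) : Set H) = dist h P := by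
      rw [Metric.infDist_eq_iInf, hP]
      simp only [dist_eq_norm]
      exact (Submodule.starProjection_minimal (U := Astar Lset A) h).symm
    rw [h1]
    exact Metric.infDist_le_dist_of_mem hPB
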